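/- Let M ≥ 1, n ≥ 1, b' ≥ 1, and 1 ≤ m ≤ 2^{b'}. Fix x ∈ {0,1}^n of Hamming weight w, index sets I_1,…,I_n ⊆ {1,…,M}, and functions g_i : {0,1}^{I_i} → F₂^{b'}. Let A₁,…,Aₙ be independent random sets, each uniformly distributed over the m-element subsets of F₂^{b'}, and define f_i(u) = 1 if g_i(u) ∈ A_i and f_i(u) = 0 otherwise. Let 𝒞(x) = {c ∈ {0,1}^M : f_i(c_{I_i}) = x_i for all i ∈ {1,…,n}} be the set of valid codewords for x. Then E[|𝒞(x)|] = 2^M · q^w · (1−q)^{n−w}, where q = m/2^{b'}. -/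

import Mathlib

open Finset

private lemma count_not_mem {α : Type*} [Fintype α] [DecidableEq α] (m : ℕ) (v : α) :
    (univ.filter fun s : {s : Finset α // s.card = m} => v ∉ s.1).card
      = (Fintype.card α - 1).choose m := by
  have h : (Fintype.card α - 1).choose m = (powersetCard m (univ.erase v)).card := by
    rw [card_powersetCard, card_erase_of_mem (mem_univ v), card_univ]
  rw [h]
  apply Finset.card_bij (
    fun s _ => s.1)
  · intro s hs
    simp only [mem_filter, mem_univ, true_and] at hs
    rw [Finset.mem_powersetCard]
    exact ⟨fun a ha => Finset.mem_erase.mpr ⟨fun h => hs (h ▸ ha), mem_univ a⟩, s.2⟩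
  · intro a _ b _ h; exact Subtype.ext h
  · intro t ht
    rw [Finset.mem_powersetCard] at ht
    refine ⟨⟨t, ht.2⟩, ?_, rfl⟩
    simp only [mem_filter, mem_univ, true_and]
    intro hv; exact (Finset.mem_erase.mp (ht.1 hv)).1 rfl

private lemma pascal' {N m : ℕ} (hN : 0 < N) (hm : 0 < m) :
    N.choose m = (N - 1).choose (m - 1) + (N - 1).choose m := by
  obtain ⟨N, rfl⟩ := Nat.exists_eq_succ_of_ne_zero hN.ne'
  obtain ⟨m, rfl⟩ := Nat.exists_eq_succ_of_ne_zero hm.ne'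
  simp [Nat.choose_succ_succ]

private lemma mul_choose' {N m : ℕ} (hN : 0 < N) (hm : 0 < m) :
    m * N.choose m = N * (N - 1).choose (m - 1) := by
  obtain ⟨N, rfl⟩ := Nat.exists_eq_succ_of_ne_zero hN.ne'
  obtain ⟨m, rfl⟩ := Nat.exists_eq_succ_of_ne_zero hm.ne'
  simp only [Nat.succ_sub_one]
  rw [Nat.succ_eq_add_one, Nat.succ_eq_add_one, Nat.add_one_mul_choose_eq]
  ring

theorem expected_number_of_valid_codewords (M n b' m w : ℕ)
    (hM : 1 ≤ M) (hn : 1 ≤ n) (hb' : 1 ≤ b') (hm1 : 1 ≤ m) (hm2 : m ≤ 2 ^ b')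
    (x : Fin n → Bool) (hw : (univ.filter (fun i => x i = true)).card = w)
    (I : Fin n → Finset (Fin M))
    (g : (i : Fin n) → ({j // j ∈ I i} → Bool) → (Fin b' → ZMod 2)) :
    (∑ A : Fin n → {s : Finset (Fin b' → ZMod 2) // s.card = m},
        ((univ.filter (fun c : Fin M → Bool =>
          ∀ i, (g i (fun j : {j // j ∈ I i} => c j.1) ∈ (A i).1 ↔ x i = true))).card : ℝ))
      / (((2 ^ b').choose m : ℝ)) ^ n
    = 2 ^ M * ((m : ℝ) / 2 ^ b') ^ w * (1 - (m : ℝ) / 2 ^ b') ^ (n - w) := by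
  classical
  have hwn : w ≤ n := by
    rw [← hw]
    exact (card_filter_le _ _).trans (by simp)
  have hNpos : 0 < 2 ^ b' := Nat.pow_pos (by norm_num)
  have hα : Fintype.card (Fin b' → ZMod 2) = 2 ^ b' := by
    simp [Fintype.card_fun]
  set N := 2 ^ b' with hN
  set C := N.choose m with hC
  set K := (N - 1).choose m with hKdef
  set K1 := (N - 1).choose (m - 1) with hK1def
  have hPascal : C = K1 + K := pascal' hNpos hm1
  have hMul : m * C = N * K1 := mul_choose' hNpos hm1
  have hCpos : 0 < C := Nat.choose_pos hm2
  -- cardinality of the subtype of m-subsets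
  have hSub : Fintype.card {s : Finset (Fin b' → ZMod 2) // s.card = m} = C := by
    rw [Fintype.card_finset_len, hα]
  -- counting lemma for a single coordinate
  have hcount : ∀ (a : Fin b' → ZMod 2) (b : Bool),
      (∑ s : {s : Finset (Fin b' → ZMod 2) // s.card = m},
        if (a ∈ s.1 ↔ b = true) then (1 : ℕ) else 0) = if b then K1 else K := by
    intro a b
    rw [← Finset.card_filter]
    have hnm : (univ.filter fun s : {s : Finset (Fin b' → ZMod 2) // s.card = m}
        => a ∉ s.1).card = K := by
      rw [count_not_mem, hα]
    cases b
    · simp only [Bool.false_eq_true, iff_false, if_false]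
      exact hnm
    · simp only [iff_true, if_true]
      have := Finset.card_filter_add_card_filter_not
        (s := (univ : Finset {s : Finset (Fin b' → ZMod 2) // s.card = m}))
        (fun s => a ∈ s.1)
      rw [card_univ, hSub] at this
      omega
  -- the numerator as a natural number
  have hnum : (∑ A : Fin n → {s : Finset (Fin b' → ZMod 2) // s.card = m},
      (univ.filter (fun c : Fin M → Bool =>
        ∀ i, (g i (fun j : {j // j ∈ I i} => c j.1) ∈ (A i).1 ↔ x i = true))).card)
      = 2 ^ M * K1 ^ w * K ^ (n - w) := by
    have hfc : (univ.filter (fun i : Fin n => ¬ x i = true)).card = n - w := by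
      have := Finset.card_filter_add_card_filter_not
        (s := (univ : Finset (Fin n))) (fun i => x i = true)
      rw [card_univ, Fintype.card_fin, hw] at this
      omega
    calc ∑ A : Fin n → {s : Finset (Fin b' → ZMod 2) // s.card = m},
          (univ.filter (fun c : Fin M → Bool =>
            ∀ i, (g i (fun j : {j // j ∈ I i} => c j.1) ∈ (A i).1 ↔ x i = true))).card
        = ∑ c : Fin M → Bool, ∑ A : Fin n → {s : Finset (Fin b' → ZMod 2) // s.card = m},
            ∏ i, if (g i (fun j : {j // j ∈ I i} => c j.1) ∈ (A i).1 ↔ x i = true)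
              then (1 : ℕ) else 0 := by
          rw [Finset.sum_comm]
          refine Finset.sum_congr rfl fun A _ => ?_
          rw [Finset.card_filter]
          refine Finset.sum_congr rfl fun c _ => ?_
          rw [Finset.prod_boole]
          simp
      _ = ∑ c : Fin M → Bool, ∏ i, ∑ s : {s : Finset (Fin b' → ZMod 2) // s.card = m},
            if (g i (fun j : {j // j ∈ I i} => c j.1) ∈ s.1 ↔ x i = true)
              then (1 : ℕ) else 0 := by
          refine Finset.sum_congr rfl fun c _ => ?_
          rw [Finset.prod_univ_sum, Fintype.piFinset_univ]
      _ = ∑ _c : Fin M → Bool, ∏ i, if x i then K1 else K := by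
          refine Finset.sum_congr rfl fun c _ => Finset.prod_congr rfl fun i _ => ?_
          exact hcount _ _
      _ = 2 ^ M * K1 ^ w * K ^ (n - w) := by
          rw [Finset.sum_const, Finset.prod_ite (f := fun _ => K1) (g := fun _ => K)]
          simp only [Finset.prod_const, hw, hfc, smul_eq_mul, card_univ]
          rw [Fintype.card_fun]
          simp [mul_assoc]
  have hnumR : (∑ A : Fin n → {s : Finset (Fin b' → ZMod 2) // s.card = m},
      ((univ.filter (fun c : Fin M → Bool =>
        ∀ i, (g i (fun j : {j // j ∈ I i} => c j.1) ∈ (A i).1 ↔ x i = true))).card : ℝ))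
      = ((2 ^ M * K1 ^ w * K ^ (n - w) : ℕ) : ℝ) := by
    rw [← Nat.cast_sum]
    exact congrArg _ hnum
  rw [hnumR]
  have hCne : (C : ℝ) ≠ 0 := Nat.cast_ne_zero.mpr hCpos.ne'
  have hNne : ((N : ℕ) : ℝ) ≠ 0 := Nat.cast_ne_zero.mpr hNpos.ne'
  have h2b : ((N : ℕ) : ℝ) = (2 : ℝ) ^ b' := by push_cast [hN]; ring
  have h1 : (K1 : ℝ) / (C : ℝ) = (m : ℝ) / 2 ^ b' := by
    rw [← h2b, div_eq_div_iff hCne hNne]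
    have hMul' : K1 * N = m * C := by rw [mul_comm]; exact hMul.symm
    exact_mod_cast hMul'
  have h2 : (K : ℝ) / (C : ℝ) = 1 - (m : ℝ) / 2 ^ b' := by
    rw [← h1]
    have : (K : ℝ) = (C : ℝ) - K1 := by
      have := congrArg (Nat.cast : ℕ → ℝ) hPascal
      push_cast at this
      linarith
    rw [this]
    field_simp
  have hCpow : (((2 ^ b').choose m : ℝ)) ^ n = (C : ℝ) ^ w * (C : ℝ) ^ (n - w) := by
    rw [← pow_add, Nat.add_sub_cancel' hwn]
  rw [hCpow]
  push_cast
  rw [← h2, ← h1]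
  have hCwne : (C : ℝ) ^ w ≠ 0 := pow_ne_zero _ hCne
  have hCnwne : (C : ℝ) ^ (n - w) ≠ 0 := pow_ne_zero _ hCne
  field_simp
  rw [div_pow, div_pow]; field_simp
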